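/- The preimage of a subinterval under a nonconstant affine map ℝ → ℝ is an interval; consequently, for a CPWL function f with breakpoints x₁ < … < x_k and any CPWL g with breakpoints y₁ < … < y_m, the set of points where g ∘ f fails to be locally affine is finite, of cardinality at most k + k·m + m. -/

import Mathlib

/-- `f` is affine on the set `s`. -/
def IsAffineOn (f : ℝ → ℝ) (s : Set ℝ) : Prop := ∃ c d : ℝ, ∀ y ∈ s, f y = c * y + d

/-- The `i`-th cell of the partition of `ℝ` into intervals determined by the
(increasingly ordered) breakpoints `x 0 < x 1 < … < x (k-1)`. -/
def cellOf {k : ℕ} (x : Fin k → ℝ) (i : Fin (k + 1)) : Set ℝ :=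
  if hk : k = 0 then Set.univ
  else if h0 : i.val = 0 then Set.Iic (x ⟨0, Nat.pos_of_ne_zero hk⟩)
  else if hik : i.val = k then Set.Ici (x ⟨k - 1, by omega⟩)
  else Set.Icc (x ⟨i.val - 1, by have := i.isLt; omega⟩) (x ⟨i.val, by have := i.isLt; omega⟩)

lemma cellOf_zero {k : ℕ} (hk : 0 < k) (x : Fin k → ℝ) :
    cellOf x ⟨0, by omega⟩ = Set.Iic (x ⟨0, hk⟩) := by
  unfold cellOf
  rw [dif_neg hk.ne', dif_pos rfl]

lemma cellOf_last {k : ℕ} (hk : 0 < k) (x : Fin k → ℝ) (h : k - 1 < k) :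
    cellOf x ⟨k, lt_add_one k⟩ = Set.Ici (x ⟨k - 1, h⟩) := by
  unfold cellOf
  rw [dif_neg hk.ne', dif_neg (hk.ne' : ¬ k = 0), dif_pos rfl]

lemma cellOf_mid {k : ℕ} (x : Fin k → ℝ) (j : ℕ) (hj : j + 1 < k) (hj' : j < k) :
    cellOf x ⟨j + 1, by omega⟩ = Set.Icc (x ⟨j, hj'⟩) (x ⟨j + 1, hj⟩) := by
  unfold cellOf
  rw [dif_neg (by omega : ¬ k = 0), dif_neg (by omega : ¬ j + 1 = 0),
    dif_neg (by omega : ¬ j + 1 = k)]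
  congr 1

/-- Cell locator: a point distinct from all breakpoints has a neighborhood inside one cell. -/
lemma cell_locator {k : ℕ} (x : Fin k → ℝ) (hx : StrictMono x) (p : ℝ)
    (hp : ∀ i, p ≠ x i) : ∃ i ε, 0 < ε ∧ Set.Ioo (p - ε) (p + ε) ⊆ cellOf x i := by
  rcases Nat.eq_zero_or_pos k with hk | hk
  · subst hk
    exact ⟨0, 1, one_pos, by simp [cellOf]⟩
  have hklt : k - 1 < k := by omega
  by_cases h0 : p < x ⟨0, hk⟩
  · refine ⟨⟨0, by omega⟩, x ⟨0, hk⟩ - p, by linarith, ?_⟩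
    rw [cellOf_zero hk]
    intro t ht
    obtain ⟨h1, h2⟩ := ht
    rw [Set.mem_Iic]
    linarith
  by_cases hlast : x ⟨k - 1, hklt⟩ < p
  · refine ⟨⟨k, lt_add_one k⟩, p - x ⟨k - 1, hklt⟩, by linarith, ?_⟩
    rw [cellOf_last hk x hklt]
    intro t ht
    obtain ⟨h1, h2⟩ := ht
    rw [Set.mem_Ici]
    linarith
  -- middle case
  have h0' : x ⟨0, hk⟩ < p := lt_of_le_of_ne (not_lt.mp h0) (fun h => hp _ h.symm)
  have hlast' : p < x ⟨k - 1, hklt⟩ := lt_of_le_of_ne (not_lt.mp hlast) (hp _)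
  set s : Finset (Fin k) := Finset.univ.filter (fun i => x i < p) with hs
  have hne : s.Nonempty := ⟨⟨0, hk⟩, by simp [hs, h0']⟩
  set i₀ := s.max' hne with hi₀
  have hi₀mem : i₀ ∈ s := s.max'_mem hne
  have hxi₀ : x i₀ < p := by simpa [hs] using hi₀mem
  have hi₀lt : i₀.val < k - 1 := by
    have hle : x i₀ < x ⟨k - 1, hklt⟩ := lt_trans hxi₀ hlast'
    have := hx.lt_iff_lt.mp hle
    exact Fin.lt_def.mp this
  have hlt : i₀.val + 1 < k := by omega
  have hnext : p < x ⟨i₀.val + 1, hlt⟩ := by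
    rcases lt_or_ge p (x ⟨i₀.val + 1, hlt⟩) with h | h
    · exact h
    · exfalso
      have hmem : (⟨i₀.val + 1, hlt⟩ : Fin k) ∈ s := by
        simp only [hs, Finset.mem_filter, Finset.mem_univ, true_and]
        exact lt_of_le_of_ne h (fun h' => hp _ h'.symm)
      have h2 : (⟨i₀.val + 1, hlt⟩ : Fin k) ≤ i₀ := s.le_max' _ hmem
      have := Fin.le_def.mp h2
      simp at this
  refine ⟨⟨i₀.val + 1, by omega⟩, min (p - x i₀) (x ⟨i₀.val + 1, hlt⟩ - p),
    lt_min (by linarith) (by linarith), ?_⟩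
  rw [cellOf_mid x i₀.val hlt (by omega)]
  intro t ht
  obtain ⟨h1, h2⟩ := ht
  have hm1 := min_le_left (p - x i₀) (x ⟨i₀.val + 1, hlt⟩ - p)
  have hm2 := min_le_right (p - x i₀) (x ⟨i₀.val + 1, hlt⟩ - p)
  rw [Set.mem_Icc]
  constructor
  · have : x (⟨i₀.val, by omega⟩ : Fin k) = x i₀ := congrArg x (Fin.ext rfl)
    rw [this]
    linarith
  · linarith

/-- (a) The preimage of an interval under a nonconstant affine map `ℝ → ℝ` is an
interval; (b) consequently, for CPWL `f` with breakpoints `x₁ < … < x_k` and CPWL `g`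
with breakpoints `y₁ < … < y_m`, the set of points where `g ∘ f` fails to be locally
affine is finite, of cardinality at most `k + k·m + m`. -/
theorem affine_preimage_interval_and_comp_breakpoints :
    (∀ c d : ℝ, c ≠ 0 → ∀ s : Set ℝ, s.OrdConnected →
      ((fun x : ℝ => c * x + d) ⁻¹' s).OrdConnected)
    ∧ ∀ (f g : ℝ → ℝ) (k m : ℕ) (x : Fin k → ℝ) (y : Fin m → ℝ),
        Continuous f → StrictMono x → (∀ i, IsAffineOn f (cellOf x i)) →
        Continuous g → StrictMono y → (∀ j, IsAffineOn g (cellOf y j)) →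
        {p : ℝ | ¬ ∃ ε > 0, IsAffineOn (g ∘ f) (Set.Ioo (p - ε) (p + ε))}.Finite ∧
          {p : ℝ | ¬ ∃ ε > 0, IsAffineOn (g ∘ f) (Set.Ioo (p - ε) (p + ε))}.ncard
            ≤ k + k * m + m := by
  constructor
  · -- part (a)
    intro c d hc s hs
    constructor
    intro a ha b hb z hz
    simp only [Set.mem_preimage] at ha hb ⊢
    rcases lt_or_gt_of_ne hc with hneg | hpos
    · exact hs.out' hb ha ⟨by nlinarith [hz.1, hz.2], by nlinarith [hz.1, hz.2]⟩
    · exact hs.out' ha hb ⟨by nlinarith [hz.1, hz.2], by nlinarith [hz.1, hz.2]⟩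
  · -- part (b)
    intro f g k m x y _hfc hx hf _hgc hy hg
    choose c d hcd using hf
    -- the finite covering set
    set F : (Fin k ⊕ Fin (k + 1) × Fin m) → ℝ := fun z =>
      match z with
      | Sum.inl i => x i
      | Sum.inr (i, j) => if c i = 0 then 0 else (y j - d i) / c i with hF
    have hcover : {p : ℝ | ¬ ∃ ε > 0, IsAffineOn (g ∘ f) (Set.Ioo (p - ε) (p + ε))}
        ⊆ Set.range F := by
      intro p hp
      by_contra hpr
      apply hp
      simp only [Set.mem_range, not_exists] at hpr
      have hpx : ∀ i, p ≠ x i := fun i h => hpr (Sum.inl i) h.symm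
      obtain ⟨i, ε, hε, hsub⟩ := cell_locator x hx p hpx
      have hfp : ∀ t ∈ Set.Ioo (p - ε) (p + ε), f t = c i * t + d i :=
        fun t ht => hcd i t (hsub ht)
      have hpmem : p ∈ Set.Ioo (p - ε) (p + ε) := by constructor <;> linarith
      by_cases hci : c i = 0
      · -- f is locally constant
        refine ⟨ε, hε, 0, g (d i), ?_⟩
        intro t ht
        have := hfp t ht
        rw [Function.comp_apply, this, hci]
        ring_nf
      · -- f nonconstant near p; f p avoids all breakpoints of g
        have hfpy : ∀ j, f p ≠ y j := by
          intro j h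
          apply hpr (Sum.inr (i, j))
          rw [hF]
          simp only [if_neg hci]
          rw [hfp p hpmem] at h
          field_simp
          linarith [h]
        obtain ⟨j, δ, hδ, hsub'⟩ := cell_locator y hy (f p) hfpy
        obtain ⟨a, b, hab⟩ := hg j
        refine ⟨min ε (δ / |c i|), lt_min hε (div_pos hδ (abs_pos.mpr hci)), a * c i,
          a * d i + b, ?_⟩
        intro t ht
        have htε : t ∈ Set.Ioo (p - ε) (p + ε) := by
          obtain ⟨h1, h2⟩ := ht
          have := min_le_left ε (δ / |c i|)
          constructor <;> linarith
        have hft : f t = c i * t + d i := hfp t htε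
        have hmem' : f t ∈ Set.Ioo (f p - δ) (f p + δ) := by
          have hfp' : f p = c i * p + d i := hfp p hpmem
          have habs : |f t - f p| < δ := by
            rw [hft, hfp']
            have h1 : c i * t + d i - (c i * p + d i) = c i * (t - p) := by ring
            rw [h1, abs_mul]
            have htp : |t - p| < δ / |c i| := by
              rw [abs_lt]
              obtain ⟨h1', h2'⟩ := ht
              have := min_le_right ε (δ / |c i|)
              constructor <;> linarith
            calc |c i| * |t - p| < |c i| * (δ / |c i|) :=
                  (mul_lt_mul_iff_right₀ (abs_pos.mpr hci)).mpr htp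
              _ = δ := by field_simp
          rw [abs_lt] at habs
          constructor <;> linarith [habs.1, habs.2]
        have := hab (f t) (hsub' hmem')
        rw [Function.comp_apply, this, hft]
        ring
    have hfin : (Set.range F).Finite := Set.finite_range F
    refine ⟨hfin.subset hcover, ?_⟩
    calc {p : ℝ | ¬ ∃ ε > 0, IsAffineOn (g ∘ f) (Set.Ioo (p - ε) (p + ε))}.ncard
        ≤ (Set.range F).ncard := Set.ncard_le_ncard hcover hfin
      _ ≤ Fintype.card (Fin k ⊕ Fin (k + 1) × Fin m) := by
          rw [← Set.image_univ]
          calc (F '' Set.univ).ncard ≤ (Set.univ : Set (Fin k ⊕ Fin (k + 1) × Fin m)).ncard :=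
                Set.ncard_image_le Set.finite_univ
            _ = _ := by rw [Set.ncard_univ, Nat.card_eq_fintype_card]
      _ = k + k * m + m := by simp [Fintype.card_sum, Fintype.card_prod]; ring
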